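/- Let G be a C_{≥t}-free graph (t ≥ 4 even) with no K_{ℓ,ℓ} subgraph. Let X be a set of at least q·t/2 vertices with G[X] q-colorable, and Y an independent set disjoint from X with |Y| ≥ ℓ·|X|^{qt/2}. Then there exist X' ⊆ X and Y' ⊆ Y with |X'| > |X| − ℓ and |Y'| ≥ |Y| / |X|^{qt/2} such that no vertex of X' is adjacent to any vertex of Y'. -/

import Mathlib

/-- `G` contains `K_{ℓ,ℓ}` as a (not necessarily induced) subgraph. -/
def ContainsKll {V : Type*} (G : SimpleGraph V) (ℓ : ℕ) : Prop :=
  ∃ A B : Finset V, Disjoint A B ∧ A.card = ℓ ∧ B.card = ℓ ∧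
    ∀ a ∈ A, ∀ b ∈ B, G.Adj a b

/-- `G` contains an induced copy of `H`. -/
def HasInducedCopy {W V : Type*} (H : SimpleGraph W) (G : SimpleGraph V) : Prop :=
  ∃ f : W ↪ V, ∀ a b : W, G.Adj (f a) (f b) ↔ H.Adj a b


private lemma modcase {x n : ℕ} (h0 : 0 < n) (h : x < 2 * n) :
    x % n = if x < n then x else x - n := by
  split_ifs with h1
  · exact Nat.mod_eq_of_lt h1
  · rw [Nat.mod_eq_sub_mod (by omega), Nat.mod_eq_of_lt (by omega)]

private lemma two_mul_choose_le {n k : ℕ} (hk : 2 ≤ k) : 2 * n.choose k ≤ n ^ k := by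
  have h1 : k.factorial * n.choose k = n.descFactorial k :=
    (Nat.descFactorial_eq_factorial_mul_choose n k).symm
  have h2 : n.descFactorial k ≤ n ^ k := Nat.descFactorial_le_pow n k
  have h3 : 2 ≤ k.factorial := by
    calc 2 = Nat.factorial 2 := rfl
    _ ≤ k.factorial := Nat.factorial_le hk
  have h4 : 2 * n.choose k ≤ k.factorial * n.choose k :=
    Nat.mul_le_mul_right _ h3
  omega

private lemma sum_choose_le {n D : ℕ} (hn : 2 ≤ n) (hD : 2 ≤ D) :
    ∑ i ∈ Finset.range (D + 1), n.choose i ≤ n ^ D := by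
  induction D with
  | zero => omega
  | succ d ih =>
    rcases Nat.lt_or_ge d 2 with hd | hd
    · have hd1 : d = 1 := by omega
      subst hd1
      rw [Finset.sum_range_succ, Finset.sum_range_succ, Finset.sum_range_one]
      show n.choose 0 + n.choose 1 + n.choose 2 ≤ n ^ 2
      have e0 : n.choose 0 = 1 := Nat.choose_zero_right n
      have e1 : n.choose 1 = n := Nat.choose_one_right n
      have e2 : 2 * n.choose 2 = n * n - n := by
        have h1 : Nat.factorial 2 * n.choose 2 = n.descFactorial 2 :=
          (Nat.descFactorial_eq_factorial_mul_choose n 2).symm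
        have h2 : n.descFactorial 2 = (n - 1) * n := by
          simp [Nat.descFactorial_succ, Nat.descFactorial_one, Nat.mul_comm]
        have h3 : (n - 1) * n = n * n - n := by
          rw [Nat.sub_mul]; omega
        simp [Nat.factorial] at h1
        omega
      have e3 : 2 * n ≤ n * n := Nat.mul_le_mul_right n hn
      have e4 : n ^ 2 = n * n := sq n
      omega
    · have ih' := ih (by omega)
      rw [Finset.sum_range_succ]
      have h2 := two_mul_choose_le (n := n) (k := d + 1) (by omega)
      have hp : 2 * n ^ d ≤ n ^ (d + 1) := by
        rw [pow_succ, Nat.mul_comm (n ^ d) n]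
        exact Nat.mul_le_mul_right _ hn
      omega

private lemma cycle_aux {V : Type*} (G : SimpleGraph V) (m : ℕ) (hm : 3 ≤ m)
    (Z y : Fin m → V) (hZinj : Function.Injective Z)
    (hZY : ∀ i j, Z i ≠ y j)
    (hZZ : ∀ i j, ¬ G.Adj (Z i) (Z j))
    (hyy : ∀ i j, ¬ G.Adj (y i) (y j))
    (hadj : ∀ i j : Fin m, G.Adj (y i) (Z j) ↔ (j.val = i.val ∨ j.val = (i.val + 1) % m)) :
    HasInducedCopy (SimpleGraph.cycleGraph (2 * m)) G := by
  have hm0 : 0 < m := by omega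
  have hyinj : Function.Injective y := by
    intro i i' h
    have h1 : G.Adj (y i) (Z i) := (hadj i i).2 (Or.inl rfl)
    have h2 : G.Adj (y i') (Z i') := (hadj i' i').2 (Or.inl rfl)
    rw [h] at h1
    rw [← h] at h2
    have c1 := (hadj i' i).1 h1
    have c2 := (hadj i i').1 h2
    have hi := i.isLt
    have hi' := i'.isLt
    rw [modcase hm0 (by omega)] at c1
    rw [modcase hm0 (by omega)] at c2
    apply Fin.ext
    split_ifs at c1 c2 <;> omega
  refine ⟨⟨fun k => if Even k.val then Z ⟨k.val / 2, by have := k.isLt; omega⟩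
      else y ⟨k.val / 2, by have := k.isLt; omega⟩, ?_⟩, ?_⟩
  · intro k k' h
    simp only at h
    have hk := k.isLt
    have hk' := k'.isLt
    rcases Nat.even_or_odd k.val with he | ho <;> rcases Nat.even_or_odd k'.val with he' | ho'
    · rw [if_pos he, if_pos he'] at h
      have hv := congrArg Fin.val (hZinj h)
      simp only at hv
      apply Fin.ext
      rw [Nat.even_iff] at he he'
      omega
    · rw [if_pos he, if_neg (by rw [Nat.even_iff]; rw [Nat.odd_iff] at ho'; omega)] at h
      exact absurd h (hZY _ _)
    · rw [if_neg (by rw [Nat.even_iff]; rw [Nat.odd_iff] at ho; omega), if_pos he'] at h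
      exact absurd h.symm (hZY _ _)
    · rw [if_neg (by rw [Nat.even_iff]; rw [Nat.odd_iff] at ho; omega),
        if_neg (by rw [Nat.even_iff]; rw [Nat.odd_iff] at ho'; omega)] at h
      have hv := congrArg Fin.val (hyinj h)
      simp only at hv
      apply Fin.ext
      rw [Nat.odd_iff] at ho ho'
      omega
  · intro a b
    show G.Adj (if Even a.val then _ else _) (if Even b.val then _ else _) ↔ _
    rw [SimpleGraph.cycleGraph_adj']
    have ha := a.isLt
    have hb := b.isLt
    have hsub1 : ((a - b).val : ℕ) = ((2 * m - b.val) + a.val) % (2 * m) := by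
      rw [Fin.sub_def]
    have hsub2 : ((b - a).val : ℕ) = ((2 * m - a.val) + b.val) % (2 * m) := by
      rw [Fin.sub_def]
    rw [hsub1, hsub2, modcase (by omega) (by omega), modcase (by omega) (by omega)]
    rcases Nat.even_or_odd a.val with hea | hoa <;> rcases Nat.even_or_odd b.val with heb | hob
    · rw [if_pos hea, if_pos heb]
      rw [Nat.even_iff] at hea heb
      constructor
      · intro h; exact absurd h (hZZ _ _)
      · intro h; exfalso; split_ifs at h <;> omega
    · rw [if_pos hea, if_neg (by rw [Nat.even_iff]; rw [Nat.odd_iff] at hob; omega)]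
      rw [G.adj_comm, hadj]
      simp only
      rw [modcase hm0 (by omega)]
      rw [Nat.even_iff] at hea
      rw [Nat.odd_iff] at hob
      split_ifs <;> omega
    · rw [if_neg (by rw [Nat.even_iff]; rw [Nat.odd_iff] at hoa; omega), if_pos heb]
      rw [hadj]
      simp only
      rw [modcase hm0 (by omega)]
      rw [Nat.even_iff] at heb
      rw [Nat.odd_iff] at hoa
      split_ifs <;> omega
    · rw [if_neg (by rw [Nat.even_iff]; rw [Nat.odd_iff] at hoa; omega),
        if_neg (by rw [Nat.even_iff]; rw [Nat.odd_iff] at hob; omega)]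
      rw [Nat.odd_iff] at hoa hob
      constructor
      · intro h; exact absurd h (hyy _ _)
      · intro h; exfalso; split_ifs at h <;> omega

/-- `G` is `C_{≥t}`-free: it has no induced cycle with at least `t` vertices. -/
def CgeFree {V : Type*} (t : ℕ) (G : SimpleGraph V) : Prop :=
  ∀ n : ℕ, t ≤ n → ¬ HasInducedCopy (SimpleGraph.cycleGraph n) G

theorem stmt10 {V : Type*} [Fintype V] [DecidableEq V] (G : SimpleGraph V)
    [DecidableRel G.Adj] (t q ℓ : ℕ) (hteven : Even t) (ht : 4 ≤ t) (hq : 1 ≤ q)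
    (hℓ : 1 ≤ ℓ) (hG : CgeFree t G) (hK : ¬ ContainsKll G ℓ) (X Y : Finset V)
    (hX : q * t / 2 ≤ X.card)
    (hcol : ∃ c : V → Fin q, ∀ u ∈ X, ∀ v ∈ X, G.Adj u v → c u ≠ c v)
    (hYind : ∀ u ∈ Y, ∀ v ∈ Y, ¬ G.Adj u v)
    (hXY : Disjoint X Y)
    (hY : ℓ * X.card ^ (q * t / 2) ≤ Y.card) :
    ∃ X' ⊆ X, ∃ Y' ⊆ Y,
      X.card < X'.card + ℓ ∧
      Y.card ≤ Y'.card * X.card ^ (q * t / 2) ∧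
      ∀ x ∈ X', ∀ y ∈ Y', ¬ G.Adj x y := by
  classical
  obtain ⟨c, hc⟩ := hcol
  obtain ⟨u, htu⟩ := hteven
  set M := q * t / 2 with hMdef
  have hqt : q * t = 2 * (q * u) := by rw [htu]; ring
  have hMq : M = q * u := by rw [hMdef, hqt]; omega
  have hu2 : 2 ≤ u := by omega
  have hM2 : 2 ≤ M := by
    rw [hMq]; exact le_trans hu2 (Nat.le_mul_of_pos_left u hq)
  have hn2 : 2 ≤ X.card := le_trans hM2 hX
  set m := max (t / 2) 3 with hmdef
  have hm3 : 3 ≤ m := le_max_right _ _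
  have htm : t ≤ 2 * m := by
    have h1 : t / 2 ≤ m := le_max_left _ _
    omega
  have hmu : m - 1 ≤ u := by
    have h1 : m ≤ u + 1 := max_le (by omega) (by omega)
    omega
  have hDM : q * (m - 1) ≤ M := by
    rw [hMq]; exact Nat.mul_le_mul_left q hmu
  have hD2 : 2 ≤ q * (m - 1) := by
    have h1 : 1 * 2 ≤ q * (m - 1) := Nat.mul_le_mul hq (by omega)
    omega
  set tr : V → Finset V := fun w => X.filter (fun x => G.Adj w x) with htr
  set 𝒜 : Finset (Finset V) := Y.image tr with h𝒜
  have h𝒜sub : ∀ A ∈ 𝒜, A ⊆ X := by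
    intro A hA
    rw [h𝒜, Finset.mem_image] at hA
    obtain ⟨w, _, rfl⟩ := hA
    exact Finset.filter_subset _ _
  -- VC dimension bound
  have hVC : ∀ s ∈ 𝒜.shatterer, s.card ≤ q * (m - 1) := by
    intro s hs
    by_contra hbig
    push_neg at hbig
    rw [Finset.mem_shatterer] at hs
    obtain ⟨A0, hA0, hsA0⟩ := hs.exists_superset
    have hsX : s ⊆ X := hsA0.trans (h𝒜sub _ hA0)
    have hmaps : ∀ x ∈ s, c x ∈ (Finset.univ : Finset (Fin q)) := fun x _ => Finset.mem_univ _
    have hcard : (Finset.univ : Finset (Fin q)).card * (m - 1) < s.card := by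
      rw [Finset.card_univ, Fintype.card_fin]; omega
    obtain ⟨j, _, hj⟩ := Finset.exists_lt_card_fiber_of_mul_lt_card_of_maps_to hmaps hcard
    obtain ⟨S', hS'sub, hS'card⟩ :=
      Finset.exists_subset_card_eq (show m ≤ (s.filter fun x => c x = j).card by omega)
    have hS'subs : S' ⊆ s := hS'sub.trans (Finset.filter_subset _ _)
    have hS'X : S' ⊆ X := hS'subs.trans hsX
    have hS'c : ∀ x ∈ S', c x = j := fun x hx => (Finset.mem_filter.1 (hS'sub hx)).2
    have hshat : 𝒜.Shatters S' := hs.mono_right hS'subs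
    let e := S'.equivFinOfCardEq hS'card
    set Z : Fin m → V := fun i => ((e.symm i : S') : V) with hZ
    have hZmem : ∀ i, Z i ∈ S' := fun i => (e.symm i).2
    have hZinj : Function.Injective Z := fun i i' h =>
      e.symm.injective (Subtype.ext h)
    set succi : Fin m → Fin m := fun i => ⟨(i.val + 1) % m, Nat.mod_lt _ (by omega)⟩ with hsucci
    have hchoice : ∀ i : Fin m, ∃ w, w ∈ Y ∧ S' ∩ tr w = {Z i, Z (succi i)} := by
      intro i
      have hpair : ({Z i, Z (succi i)} : Finset V) ⊆ S' := by
        intro x hx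
        rcases Finset.mem_insert.1 hx with h | h
        · rw [h]; exact hZmem i
        · rw [Finset.mem_singleton.1 h]; exact hZmem _
      obtain ⟨A, hA, hAeq⟩ := hshat hpair
      rw [h𝒜, Finset.mem_image] at hA
      obtain ⟨w, hw, rfl⟩ := hA
      exact ⟨w, hw, hAeq⟩
    choose yv hyY hypair using hchoice
    have hadj : ∀ i k : Fin m, G.Adj (yv i) (Z k) ↔ (k.val = i.val ∨ k.val = (i.val + 1) % m) := by
      intro i k
      have h1 : Z k ∈ S' := hZmem k
      have h2 : G.Adj (yv i) (Z k) ↔ Z k ∈ S' ∩ tr (yv i) := by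
        rw [Finset.mem_inter]
        simp [htr, Finset.mem_filter, h1, hS'X h1]
      rw [h2, hypair i]
      rw [Finset.mem_insert, Finset.mem_singleton]
      constructor
      · rintro (h | h)
        · exact Or.inl (congrArg Fin.val (hZinj h))
        · exact Or.inr (congrArg Fin.val (hZinj h))
      · rintro (h | h)
        · exact Or.inl (congrArg Z (Fin.ext h))
        · exact Or.inr (congrArg Z (Fin.ext h))
    have hcopy := cycle_aux G m hm3 Z yv hZinj
      (fun i jj h => Finset.disjoint_left.mp hXY (hS'X (hZmem i)) (h ▸ hyY jj))
      (fun i jj h => hc _ (hS'X (hZmem i)) _ (hS'X (hZmem jj)) h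
        (by rw [hS'c _ (hZmem i), hS'c _ (hZmem jj)]))
      (fun i jj => hYind _ (hyY i) _ (hyY jj))
      hadj
    exact hG (2 * m) htm hcopy
  -- Counting the number of traces
  have hcount : 𝒜.card ≤ X.card ^ M := by
    have h1 := Finset.card_le_card_shatterer 𝒜
    have h2 : 𝒜.shatterer ⊆ (Finset.range (q * (m - 1) + 1)).biUnion
        (fun i => X.powersetCard i) := by
      intro s hs
      rw [Finset.mem_biUnion]
      refine ⟨s.card, Finset.mem_range.2 (by have := hVC s hs; omega), ?_⟩
      rw [Finset.mem_powersetCard]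
      refine ⟨?_, rfl⟩
      rw [Finset.mem_shatterer] at hs
      obtain ⟨A0, hA0, hsA0⟩ := hs.exists_superset
      exact hsA0.trans (h𝒜sub _ hA0)
    have h3 := Finset.card_biUnion_le (s := Finset.range (q * (m - 1) + 1))
      (t := fun i => X.powersetCard i)
    have h4 : ∑ i ∈ Finset.range (q * (m - 1) + 1), (X.powersetCard i).card
        = ∑ i ∈ Finset.range (q * (m - 1) + 1), X.card.choose i := by
      refine Finset.sum_congr rfl fun i _ => ?_
      rw [Finset.card_powersetCard]
    have h5 := sum_choose_le hn2 hD2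
    have h6 : X.card ^ (q * (m - 1)) ≤ X.card ^ M :=
      Nat.pow_le_pow_right (by omega) hDM
    calc 𝒜.card ≤ 𝒜.shatterer.card := h1
      _ ≤ ((Finset.range (q * (m - 1) + 1)).biUnion (fun i => X.powersetCard i)).card :=
          Finset.card_le_card h2
      _ ≤ ∑ i ∈ Finset.range (q * (m - 1) + 1), (X.powersetCard i).card := h3
      _ = ∑ i ∈ Finset.range (q * (m - 1) + 1), X.card.choose i := h4
      _ ≤ X.card ^ (q * (m - 1)) := h5
      _ ≤ X.card ^ M := h6
  -- Pigeonhole to find a large uniform-trace subset of Y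
  have hP1 : 0 < X.card ^ M := Nat.pow_pos (by omega)
  have hYne : Y.Nonempty := by
    rw [← Finset.card_pos]
    have h7 : 1 * 1 ≤ ℓ * X.card ^ M := Nat.mul_le_mul hℓ hP1
    omega
  have h𝒜ne : 𝒜.Nonempty := hYne.image tr
  obtain ⟨A, hA𝒜, hAmax⟩ :=
    Finset.exists_max_image 𝒜 (fun B => (Y.filter (fun w => tr w = B)).card) h𝒜ne
  have hfib : Y.card = ∑ B ∈ 𝒜, (Y.filter (fun w => tr w = B)).card :=
    Finset.card_eq_sum_card_fiberwise (fun w hw => Finset.mem_image_of_mem tr hw)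
  have hYle : Y.card ≤ 𝒜.card * (Y.filter (fun w => tr w = A)).card := by
    rw [hfib]
    have := Finset.sum_le_card_nsmul 𝒜 (fun B => (Y.filter (fun w => tr w = B)).card)
      ((Y.filter (fun w => tr w = A)).card) (fun B hB => hAmax B hB)
    simpa [smul_eq_mul] using this
  set Y' := Y.filter (fun w => tr w = A) with hY'def
  have hY'sub : Y' ⊆ Y := Finset.filter_subset _ _
  have hY'tr : ∀ w ∈ Y', tr w = A := fun w hw => (Finset.mem_filter.1 hw).2
  have hmain : Y.card ≤ Y'.card * X.card ^ M := by
    calc Y.card ≤ 𝒜.card * Y'.card := hYle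
      _ ≤ X.card ^ M * Y'.card := Nat.mul_le_mul_right _ hcount
      _ = Y'.card * X.card ^ M := Nat.mul_comm _ _
  have hAX : A ⊆ X := h𝒜sub _ hA𝒜
  have hY'ℓ : ℓ ≤ Y'.card := by
    have h1 : ℓ * X.card ^ M ≤ Y'.card * X.card ^ M := le_trans hY hmain
    exact Nat.le_of_mul_le_mul_right h1 hP1
  have hAcard : A.card < ℓ := by
    by_contra hge
    push_neg at hge
    obtain ⟨A₁, hA₁, hA₁c⟩ := Finset.exists_subset_card_eq hge
    obtain ⟨B₁, hB₁, hB₁c⟩ := Finset.exists_subset_card_eq hY'ℓ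
    apply hK
    refine ⟨A₁, B₁, ?_, hA₁c, hB₁c, ?_⟩
    · exact Finset.disjoint_of_subset_left (hA₁.trans hAX)
        (Finset.disjoint_of_subset_right (hB₁.trans hY'sub) hXY)
    · intro a ha b hb
      have hbY' := hB₁ hb
      have h1 : a ∈ tr b := by rw [hY'tr b hbY']; exact hA₁ ha
      exact ((Finset.mem_filter.1 h1).2).symm
  refine ⟨X \ A, Finset.sdiff_subset, Y', hY'sub, ?_, hmain, ?_⟩
  · have h1 : (X \ A).card = X.card - A.card := Finset.card_sdiff_of_subset hAX
    have h2 : A.card ≤ X.card := Finset.card_le_card hAX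
    omega
  · intro x hx yy hyy hadj
    have hxX : x ∈ X := (Finset.mem_sdiff.1 hx).1
    have hxA : x ∉ A := (Finset.mem_sdiff.1 hx).2
    apply hxA
    rw [← hY'tr yy hyy]
    exact Finset.mem_filter.2 ⟨hxX, hadj.symm⟩
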